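/- Suppose h : X × U × Θ → ℝ has partial derivatives satisfying: ∂h/∂x is ℓ_{h,x}-Lipschitz in u, ∂h/∂u is ℓ_{h,u}-Lipschitz in u and bounded in norm by L_{h,u}, f(·,a) has x-derivative bounded by L_{f,x}, and ψ has x-derivative bounded by L_{ψ,x}. Define h*(x,θ) = h(x, ψ(x,θ) - f(x,a*), θ) and ĥ(x,θ) = h(x, ψ(x,θ) - f(x,â), θ). Then ‖∂h*/∂x − ∂ĥ/∂x‖ at any point (x,θ) is bounded by (ℓ_{h,x} + ℓ_{h,u}L_{f,x} + ℓ_{h,u}L_{ψ,x})·ε + L_{h,u}·ε', where ε = ‖f(x,a*) − f(x,â)‖ and ε' = ‖∂f/∂x(x,a*) − ∂f/∂x(x,â)‖. -/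

import Mathlib

/-- Difference of the x-partial derivatives of the exact and inexact surrogate costs. -/
theorem stmt_1 {X U Th A : Type*} [NormedAddCommGroup X] [NormedSpace ℝ X]
    [NormedAddCommGroup U] [NormedSpace ℝ U]
    (ψ : X → Th → U) (f : X → A → U)
    (Dhx : X → U → Th → (X →L[ℝ] ℝ)) (Dhu : X → U → Th → (U →L[ℝ] ℝ))
    (Dfx : X → A → (X →L[ℝ] U)) (Dψx : X → Th → (X →L[ℝ] U))
    (ℓhx ℓhu Lhu Lfx Lψx : ℝ)
    (h1 : ∀ x u u' θ, ‖Dhx x u θ - Dhx x u' θ‖ ≤ ℓhx * ‖u - u'‖)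
    (h2 : ∀ x u u' θ, ‖Dhu x u θ - Dhu x u' θ‖ ≤ ℓhu * ‖u - u'‖)
    (h3 : ∀ x u θ, ‖Dhu x u θ‖ ≤ Lhu)
    (h4 : ∀ x a, ‖Dfx x a‖ ≤ Lfx)
    (h5 : ∀ x θ, ‖Dψx x θ‖ ≤ Lψx)
    (x : X) (θ : Th) (astar ahat : A) :
    ‖(Dhx x (ψ x θ - f x astar) θ
        + (Dhu x (ψ x θ - f x astar) θ).comp (Dψx x θ - Dfx x astar))
      - (Dhx x (ψ x θ - f x ahat) θ
        + (Dhu x (ψ x θ - f x ahat) θ).comp (Dψx x θ - Dfx x ahat))‖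
      ≤ (ℓhx + ℓhu * Lfx + ℓhu * Lψx) * ‖f x astar - f x ahat‖
        + Lhu * ‖Dfx x astar - Dfx x ahat‖ := by
  set u1 := ψ x θ - f x astar
  set u2 := ψ x θ - f x ahat
  have hu : ‖u1 - u2‖ = ‖f x astar - f x ahat‖ := by
    have : u1 - u2 = -(f x astar - f x ahat) := by simp [u1, u2]
    rw [this, norm_neg]
  have key : (Dhx x u1 θ + (Dhu x u1 θ).comp (Dψx x θ - Dfx x astar))
      - (Dhx x u2 θ + (Dhu x u2 θ).comp (Dψx x θ - Dfx x ahat))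
      = (Dhx x u1 θ - Dhx x u2 θ)
        + (Dhu x u1 θ - Dhu x u2 θ).comp (Dψx x θ - Dfx x astar)
        + (Dhu x u2 θ).comp (Dfx x ahat - Dfx x astar) := by
    ext v
    simp [ContinuousLinearMap.comp_apply, map_sub]
    ring
  rw [key]
  have e1 : ‖Dhx x u1 θ - Dhx x u2 θ‖ ≤ ℓhx * ‖f x astar - f x ahat‖ := by
    rw [← hu]; exact h1 x u1 u2 θ
  have e2 : ‖(Dhu x u1 θ - Dhu x u2 θ).comp (Dψx x θ - Dfx x astar)‖
      ≤ (ℓhu * ‖f x astar - f x ahat‖) * (Lψx + Lfx) := by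
    refine le_trans (ContinuousLinearMap.opNorm_comp_le _ _) ?_
    have hA : ‖Dhu x u1 θ - Dhu x u2 θ‖ ≤ ℓhu * ‖f x astar - f x ahat‖ := by
      rw [← hu]; exact h2 x u1 u2 θ
    have hB : ‖Dψx x θ - Dfx x astar‖ ≤ Lψx + Lfx :=
      le_trans (norm_sub_le _ _) (add_le_add (h5 x θ) (h4 x astar))
    exact mul_le_mul hA hB (norm_nonneg _) (le_trans (norm_nonneg _) hA)
  have e3 : ‖(Dhu x u2 θ).comp (Dfx x ahat - Dfx x astar)‖
      ≤ Lhu * ‖Dfx x astar - Dfx x ahat‖ := by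
    refine le_trans (ContinuousLinearMap.opNorm_comp_le _ _) ?_
    rw [show Dfx x ahat - Dfx x astar = -(Dfx x astar - Dfx x ahat) by abel, norm_neg]
    exact mul_le_mul_of_nonneg_right (h3 x u2 θ) (norm_nonneg _)
  calc ‖_ + _ + _‖ ≤ ‖(Dhx x u1 θ - Dhx x u2 θ)
        + (Dhu x u1 θ - Dhu x u2 θ).comp (Dψx x θ - Dfx x astar)‖
        + ‖(Dhu x u2 θ).comp (Dfx x ahat - Dfx x astar)‖ := norm_add_le _ _
    _ ≤ (‖Dhx x u1 θ - Dhx x u2 θ‖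
        + ‖(Dhu x u1 θ - Dhu x u2 θ).comp (Dψx x θ - Dfx x astar)‖)
        + ‖(Dhu x u2 θ).comp (Dfx x ahat - Dfx x astar)‖ :=
          add_le_add_left (norm_add_le _ _) _
    _ ≤ (ℓhx * ‖f x astar - f x ahat‖ + (ℓhu * ‖f x astar - f x ahat‖) * (Lψx + Lfx))
        + Lhu * ‖Dfx x astar - Dfx x ahat‖ := add_le_add (add_le_add e1 e2) e3
    _ = (ℓhx + ℓhu * Lfx + ℓhu * Lψx) * ‖f x astar - f x ahat‖
        + Lhu * ‖Dfx x astar - Dfx x ahat‖ := by ring
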